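/- Let y₁ and y₂ be left-infinite words over a finite alphabet A and let Q ≥ 1 be an integer. If for every q ∈ ℕ there exists m ≥ q with g(tₘ y₁, tₘ y₂) ≤ Q, then y₁ and y₂ are confinal. -/

import Mathlib

/- Left-infinite words over an alphabet `A` are functions `ℕ → A`;
`w n` is the letter at distance `n` from the right end. -/

variable {A : Type*}

/-- `app w z` appends the finite word `z` on the right of the left-infinite word `w`. -/
def app (w : ℕ → A) (z : List A) : ℕ → A :=
  fun n => if h : n < z.length then z.get ⟨z.length - 1 - n, by omega⟩ else w (n - z.length)

/-- `suff m w` is the suffix of length `m` of `w`: the finite word `w (m-1) ⋯ w 1 w 0`. -/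
def suff (m : ℕ) (w : ℕ → A) : List A :=
  List.ofFn (fun i : Fin m => w (m - 1 - i))

/-- Two left-infinite words are confinal if they share a common left-infinite prefix. -/
def Confinal (v₁ v₂ : ℕ → A) : Prop :=
  ∃ (y : ℕ → A) (z₁ z₂ : List A), v₁ = app y z₁ ∧ v₂ = app y z₂

/-- `negPow u hu` is the periodic left-infinite word `u⁻∞ = ⋯uuu`. -/
def negPow (u : List A) (hu : u ≠ []) : ℕ → A :=
  fun n => u.get ⟨u.length - 1 - n % u.length, by
    have h : u.length ≠ 0 := fun h0 => hu (List.length_eq_zero_iff.mp h0)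
    omega⟩

/-- A left-infinite word is periodic if it is `u⁻∞` for some nonempty finite word `u`. -/
def Periodic (w : ℕ → A) : Prop :=
  ∃ (u : List A) (hu : u ≠ []), w = negPow u hu

/-- The gap between two finite words `w₁, w₂`:
`g(w₁,w₂) = min {|u| : u ∈ A⁺, ∃ v ∈ A⁺, w₁u = vw₂ or w₂u = vw₁}`. -/
noncomputable def gap (w₁ w₂ : List A) : ℕ :=
  sInf {n : ℕ | ∃ u v : List A, u ≠ [] ∧ v ≠ [] ∧ u.length = n ∧
    (w₁ ++ u = v ++ w₂ ∨ w₂ ++ u = v ++ w₁)}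

/-- `listPow u n` is the `n`-fold concatenation `uⁿ`. -/
def listPow (u : List A) : ℕ → List A
  | 0 => []
  | n + 1 => u ++ listPow u n

/-- A nonempty finite word is primitive if it is not of the form `xⁿ` with `n ≥ 2`. -/
def Primitive (u : List A) : Prop :=
  u ≠ [] ∧ ∀ (x : List A) (n : ℕ), 2 ≤ n → u ≠ listPow x n

/-- `tk k w`: the longest suffix of `w` of length at most `k`. -/
def tk (k : ℕ) (w : List A) : List A := w.drop (w.length - k)

/-- `ik k w`: the longest prefix of `w` of length at most `k`. -/
def ik (k : ℕ) (w : List A) : List A := w.take k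

/-- The factor of `w = a₁⋯aₙ` of length `M` ending at the (1-indexed) position `m`:
`a_{m-M+1} ⋯ a_m`. -/
def factorAt (M : ℕ) (w : List A) (m : ℕ) : List A := (w.take m).drop (m - M)

/-- `m` is a bound of `w` w.r.t. the set `B ⊆ A^M` of borders. -/
def IsBound (B : Set (List A)) (M : ℕ) (w : List A) (m : ℕ) : Prop :=
  M ≤ m ∧ m ≤ w.length ∧ factorAt M w m ∈ B

/- The splitting point of `w`: its last bound if it has one, and `|w|` otherwise. -/
open Classical in
noncomputable def splitPoint (B : Set (List A)) (M : ℕ) (w : List A) : ℕ :=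
  if ∃ m, IsBound B M w m then sSup {m | IsBound B M w m} else w.length

/-- `Phik k w`: the sequence of all factors of `w` of length `k+1`, in the order
in which they occur in `w`. -/
def Phik (k : ℕ) (w : List A) : List (List A) :=
  List.ofFn (fun i : Fin (w.length - k) => (w.drop i).take (k + 1))

/-- A Lyndon word: a primitive word lexicographically minimal in its conjugacy class. -/
def IsLyndon [LinearOrder A] (u : List A) : Prop :=
  Primitive u ∧ ∀ w₁ w₂ : List A, u = w₁ ++ w₂ → u ≤ w₂ ++ w₁

/-- `A^{-∞}`: the disjoint union of the nonempty finite words and the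
left-infinite words over `A`. -/
def Ainf (A : Type*) := {l : List A // l ≠ []} ⊕ (ℕ → A)

/-- Multiplication on `A^{-∞}`: concatenation of finite words; appending a finite word
on the right of a left-infinite word; left-infinite words are right zeros. -/
def mulAinf : Ainf A → Ainf A → Ainf A
  | Sum.inl u, Sum.inl v => Sum.inl ⟨u.1 ++ v.1, fun h => u.2 (List.append_eq_nil_iff.mp h).1⟩
  | Sum.inl _, Sum.inr w => Sum.inr w
  | Sum.inr w, Sum.inl z => Sum.inr (app w z.1)
  | Sum.inr _, Sum.inr w => Sum.inr w

lemma suff_getElem? (w : ℕ → A) (m i : ℕ) (hi : i < m) :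
    (suff m w)[i]? = some (w (m - 1 - i)) := by
  simp [suff, List.getElem?_ofFn, List.ofFnNthVal, hi]

lemma suff_length (w : ℕ → A) (m : ℕ) : (suff m w).length = m := by simp [suff]

/-- extraction lemma -/
lemma key_extract (y₁ y₂ : ℕ → A) (m Q : ℕ) (hm : Q + 1 ≤ m)
    (hg : gap (suff m y₁) (suff m y₂) ≤ Q) :
    ∃ d, 1 ≤ d ∧ d ≤ Q ∧
      ((∀ j, j + d ≤ m - 1 → y₁ j = y₂ (j + d)) ∨
       (∀ j, j + d ≤ m - 1 → y₂ j = y₁ (j + d))) := by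
  set S : Set ℕ := {n : ℕ | ∃ u v : List A, u ≠ [] ∧ v ≠ [] ∧ u.length = n ∧
    (suff m y₁ ++ u = v ++ suff m y₂ ∨ suff m y₂ ++ u = v ++ suff m y₁)} with hS
  have hmpos : 0 < m := by omega
  have hSne : S.Nonempty := by
    refine ⟨m, suff m y₂, suff m y₁, ?_, ?_, suff_length _ _, Or.inl rfl⟩
    · intro hnil
      have := suff_length y₂ m
      rw [hnil] at this
      simp at this; omega
    · intro hnil
      have := suff_length y₁ m
      rw [hnil] at this
      simp at this; omega
  have hmem : gap (suff m y₁) (suff m y₂) ∈ S := Nat.sInf_mem hSne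
  obtain ⟨u, v, hu, hv, hlen, heq⟩ := hmem
  set d := u.length with hd
  have hd1 : 1 ≤ d := List.length_pos_iff.mpr hu
  have hdQ : d ≤ Q := le_trans (le_of_eq hlen) hg
  have hvlen : v.length = d := by
    rcases heq with e | e
    · have := congrArg List.length e
      simp [suff_length] at this; omega
    · have := congrArg List.length e
      simp [suff_length] at this; omega
  refine ⟨d, hd1, hdQ, ?_⟩
  have main : ∀ (w₁ w₂ : ℕ → A), suff m w₁ ++ u = v ++ suff m w₂ →
      ∀ j, j + d ≤ m - 1 → w₁ j = w₂ (j + d) := by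
    intro w₁ w₂ e j hj
    set i := m - 1 - j with hi
    have hip : i < m := by omega
    have hdi : d ≤ i := by omega
    have e1 : (suff m w₁ ++ u)[i]? = (v ++ suff m w₂)[i]? := by rw [e]
    rw [List.getElem?_append_left (by rw [suff_length]; exact hip)] at e1
    rw [List.getElem?_append_right (by omega)] at e1
    rw [suff_getElem? _ _ _ hip, hvlen, suff_getElem? _ _ _ (by omega)] at e1
    have e2 : w₁ (m - 1 - i) = w₂ (m - 1 - (i - d)) := Option.some.inj e1
    have h1 : m - 1 - i = j := by omega
    have h2 : m - 1 - (i - d) = j + d := by omega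
    rw [h1, h2] at e2
    exact e2
  rcases heq with e | e
  · exact Or.inl (main y₁ y₂ e)
  · exact Or.inr (main y₂ y₁ e)

lemma confinal_shift (w₁ w₂ : ℕ → A) (d : ℕ) (hd : 1 ≤ d)
    (hw : ∀ j, w₁ j = w₂ (j + d)) : Confinal w₁ w₂ := by
  refine ⟨fun n => w₂ (n + d), [], suff d w₂, ?_, ?_⟩
  · funext n; simp [app, hw]
  · funext n
    simp only [app]
    split
    · next hn =>
      rw [suff_length] at hn
      simp only [suff]
      rw [List.get_ofFn]
      congr 1
      simp only [Fin.coe_cast, List.length_ofFn]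
      omega
    · next hn =>
      have hl : (suff d w₂).length = d := suff_length _ _
      rw [hl] at hn ⊢
      congr 1
      omega

/-- if `g(tₘ y₁, tₘ y₂) ≤ Q` for arbitrarily large `m`, then `y₁` and `y₂`
are confinal. -/
theorem stmt4 [Fintype A] (y₁ y₂ : ℕ → A) (Q : ℕ) (hQ : 1 ≤ Q)
    (h : ∀ q : ℕ, ∃ m : ℕ, q ≤ m ∧ gap (suff m y₁) (suff m y₂) ≤ Q) :
    Confinal y₁ y₂ := by
  -- for each q, pick (d, b) with agreement up to q
  have claim : ∀ q : ℕ, ∃ p : Fin (Q + 1) × Bool, 1 ≤ (p.1 : ℕ) ∧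
      ∀ j ≤ q, cond p.2 (y₁ j = y₂ (j + (p.1 : ℕ))) (y₂ j = y₁ (j + (p.1 : ℕ))) := by
    intro q
    obtain ⟨m, hm, hg⟩ := h (q + Q + 2)
    obtain ⟨d, hd1, hdQ, hcase⟩ := key_extract y₁ y₂ m Q (by omega) hg
    rcases hcase with hc | hc
    · exact ⟨(⟨d, by omega⟩, true), hd1, fun j hj => hc j (by omega)⟩
    · exact ⟨(⟨d, by omega⟩, false), hd1, fun j hj => hc j (by omega)⟩
  choose F hF1 hF2 using claim
  obtain ⟨p, hp'⟩ := Finite.exists_infinite_fiber F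
  have hp : (F ⁻¹' {p}).Infinite := Set.infinite_coe_iff.mp hp'
  have hall : ∀ j, cond p.2 (y₁ j = y₂ (j + (p.1 : ℕ))) (y₂ j = y₁ (j + (p.1 : ℕ))) := by
    intro j
    obtain ⟨q, hq, hjq⟩ := hp.exists_gt j
    have hq' : F q = p := hq
    have := hF2 q j (le_of_lt hjq)
    rwa [hq'] at this
  obtain ⟨q0, hq0, _⟩ := hp.exists_gt 0
  have hd1 : 1 ≤ (p.1 : ℕ) := by
    have := hF1 q0
    rwa [show F q0 = p from hq0] at this
  rcases hb : p.2 with _ | _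
  · -- p.2 = false : y₂ j = y₁ (j + d)
    obtain ⟨y, z₁, z₂, h1, h2⟩ := confinal_shift y₂ y₁ (p.1 : ℕ) hd1
      (fun j => by have := hall j; rwa [hb] at this)
    exact ⟨y, z₂, z₁, h2, h1⟩
  · exact confinal_shift y₁ y₂ (p.1 : ℕ) hd1
      (fun j => by have := hall j; rwa [hb] at this)
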